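/- Let A : X → Y and B, C : Y → X be bounded linear operators satisfying A(BA)² = ABACA = ACABA = (AC)²A, and let Q be a polynomial. Then ACA maps the range of Q(BA − I) into the range of Q(AC − I), and ACA maps the kernel of Q(BA − I) into the kernel of Q(AC − I). -/

import Mathlib

open Polynomial ContinuousLinearMap

variable {X Y : Type*} [NormedAddCommGroup X] [NormedSpace ℂ X] [CompleteSpace X]
  [NormedAddCommGroup Y] [NormedSpace ℂ Y] [CompleteSpace Y]

lemma intertwine_aux (A : X →L[ℂ] Y) (B C : Y →L[ℂ] X)
    (h3 : A ∘L C ∘L A ∘L B ∘L A = A ∘L C ∘L A ∘L C ∘L A) (Q : ℂ[X]) :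
    (A ∘L C ∘L A) ∘L (Polynomial.aeval (B ∘L A - 1) Q) =
      (Polynomial.aeval (A ∘L C - 1) Q) ∘L (A ∘L C ∘L A) := by
  have key : (A ∘L C ∘L A) ∘L (B ∘L A - 1) = (A ∘L C - 1) ∘L (A ∘L C ∘L A) := by
    ext x
    have := congrArg (fun f => f x) h3
    simp only [coe_comp', Function.comp_apply, comp_apply, sub_apply, one_apply,
      comp_sub, ContinuousLinearMap.sub_comp, one_def, id_apply] at *
    simpa using congrArg (fun y => y - (A ∘L C ∘L A) x) this
  have pow : ∀ n : ℕ, (A ∘L C ∘L A) ∘L (B ∘L A - 1) ^ n =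
      ((A ∘L C - 1) ^ n) ∘L (A ∘L C ∘L A) := by
    intro n
    induction n with
    | zero => simp [pow_zero]; rfl
    | succ n ih =>
      rw [pow_succ, pow_succ, ContinuousLinearMap.mul_def, ContinuousLinearMap.mul_def,
        ← ContinuousLinearMap.comp_assoc, ih, ContinuousLinearMap.comp_assoc, key,
        ← ContinuousLinearMap.comp_assoc]
  induction Q using Polynomial.induction_on' with
  | add p q hp hq => simp [map_add, comp_add, ContinuousLinearMap.add_comp, hp, hq]
  | monomial n a =>
    simp only [aeval_monomial]
    rw [Algebra.algebraMap_eq_smul_one, Algebra.algebraMap_eq_smul_one,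
      smul_mul_assoc, one_mul, smul_mul_assoc, one_mul, comp_smul, ContinuousLinearMap.smul_comp, pow n]

theorem stmt3 (A : X →L[ℂ] Y) (B C : Y →L[ℂ] X)
    (h1 : A ∘L B ∘L A ∘L B ∘L A = A ∘L B ∘L A ∘L C ∘L A)
    (h2 : A ∘L B ∘L A ∘L C ∘L A = A ∘L C ∘L A ∘L B ∘L A)
    (h3 : A ∘L C ∘L A ∘L B ∘L A = A ∘L C ∘L A ∘L C ∘L A) (Q : ℂ[X]) :
    (∀ x : X, x ∈ LinearMap.range (Polynomial.aeval (B ∘L A - 1) Q : X →ₗ[ℂ] X) →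
      (A ∘L C ∘L A) x ∈ LinearMap.range (Polynomial.aeval (A ∘L C - 1) Q : Y →ₗ[ℂ] Y)) ∧
    (∀ x : X, x ∈ LinearMap.ker (Polynomial.aeval (B ∘L A - 1) Q : X →ₗ[ℂ] X) →
      (A ∘L C ∘L A) x ∈ LinearMap.ker (Polynomial.aeval (A ∘L C - 1) Q : Y →ₗ[ℂ] Y)) := by
  have key := intertwine_aux A B C h3 Q
  have keyx : ∀ x : X, (A ∘L C ∘L A) ((Polynomial.aeval (B ∘L A - 1) Q) x) =
      (Polynomial.aeval (A ∘L C - 1) Q) ((A ∘L C ∘L A) x) := by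
    intro x; exact congrArg (fun f => f x) key
  constructor
  · rintro x ⟨y, rfl⟩
    exact ⟨(A ∘L C ∘L A) y, (keyx y).symm⟩
  · intro x hx
    rw [LinearMap.mem_ker] at *
    erw [← keyx x]
    simp [show (Polynomial.aeval (B ∘L A - 1) Q) x = 0 from hx]
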